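/- Suppose X = (X_1,…,X_5) are random variables with values in F_3 such that for all distinct a,b,c,d,e with {a,b,c,d,e} = {1,…,5}, the conditional entropy H(X_a, X_b, X_c | X_d, X_e) = 0 and H(X_d, X_e) = 2 (entropies in base 3). Then for every outcome x ∈ F_3^5, P(X = x) ∈ {0, 1/9}. -/

import Mathlib

open scoped Classical BigOperators

/-- Shannon entropy in base `q` of a probability mass function on a finite type. -/
noncomputable def shannonEntropy {α : Type*} [Fintype α] (q : ℝ) (μ : PMF α) : ℝ :=
  -∑ x : α, (μ x).toReal * Real.logb q (μ x).toReal

/-- Marginal of a distribution on `ι → α` on the coordinates in `S`. -/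
noncomputable def marg {ι α : Type*} (μ : PMF (ι → α)) (S : Finset ι) :
    PMF ({ i // i ∈ S } → α) :=
  μ.map fun x i => x i.1

lemma aux_log_ge {t : ℝ} (ht : 0 < t) : 1 - t⁻¹ ≤ Real.log t := by
  have h := Real.log_le_sub_one_of_pos (inv_pos.2 ht)
  rw [Real.log_inv] at h
  linarith

lemma aux_log_eq {t : ℝ} (ht : 0 < t) (heq : Real.log t = 1 - t⁻¹) : t = 1 := by
  by_contra hne
  have h := Real.log_lt_sub_one_of_pos (inv_pos.2 ht) (by simp [inv_eq_one, hne])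
  rw [Real.log_inv] at h
  linarith

lemma pmf_toReal_sum_one {β : Type*} [Fintype β] (ν : PMF β) :
    ∑ y : β, (ν y).toReal = 1 := by
  rw [← ENNReal.toReal_sum (fun a _ => ν.apply_ne_top a), ← tsum_fintype (L := .unconditional _), ν.tsum_coe,
    ENNReal.toReal_one]

lemma shannonEntropy_map_of_injective {α β : Type*} [Fintype α] [Fintype β]
    (q : ℝ) (μ : PMF α) (f : α → β) (hf : Function.Injective f) :
    shannonEntropy q (μ.map f) = shannonEntropy q μ := by
  have hmap : ∀ x, (μ.map f) (f x) = μ x := by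
    intro x
    rw [PMF.map_apply, tsum_eq_single x]
    · simp
    · intro b hb
      have : f x ≠ f b := fun hc => hb (hf hc.symm)
      simp [this]
  have hzero : ∀ y, y ∉ Finset.univ.image f → (μ.map f) y = 0 := by
    intro y hy
    rw [PMF.map_apply]
    refine ENNReal.tsum_eq_zero.2 fun a => ?_
    have : y ≠ f a := by
      intro hc
      exact hy (Finset.mem_image.2 ⟨a, Finset.mem_univ a, hc.symm⟩)
    simp [this]
  unfold shannonEntropy
  congr 1
  rw [← Finset.sum_subset (Finset.subset_univ (Finset.univ.image f))
    (fun y _ hy => by rw [hzero y hy]; simp)]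
  rw [Finset.sum_image (fun a _ b _ hab => hf hab)]
  exact Finset.sum_congr rfl fun x _ => by rw [hmap]

lemma uniform_of_entropy_eq {β : Type*} [Fintype β] (hcard : Fintype.card β = 9)
    (ν : PMF β) (hH : shannonEntropy 3 ν = 2) : ∀ y, (ν y).toReal = 1 / 9 := by
  set qv : β → ℝ := fun y => (ν y).toReal with hqv
  have hqnn : ∀ y, 0 ≤ qv y := fun y => ENNReal.toReal_nonneg
  have hsum : ∑ y, qv y = 1 := pmf_toReal_sum_one ν
  have hlog3 : (0:ℝ) < Real.log 3 := Real.log_pos (by norm_num)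
  have h9 : Real.log 9 = 2 * Real.log 3 := by
    rw [show (9:ℝ) = 3 ^ (2:ℕ) by norm_num, Real.log_pow]; push_cast; ring
  have hblog : ∑ y, qv y * Real.logb 3 (qv y) = -2 := by
    unfold shannonEntropy at hH; linarith
  have hlogsum : ∑ y, qv y * Real.log (qv y) = -2 * Real.log 3 := by
    have : ∑ y, qv y * Real.log (qv y)
        = (∑ y, qv y * Real.logb 3 (qv y)) * Real.log 3 := by
      rw [Finset.sum_mul]
      refine Finset.sum_congr rfl fun y _ => ?_
      rw [Real.logb]
      field_simp
    rw [this, hblog]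
  have hgsum : ∑ y, qv y * Real.log (9 * qv y) = 0 := by
    have hterm : ∀ y ∈ Finset.univ, qv y * Real.log (9 * qv y)
        = qv y * Real.log 9 + qv y * Real.log (qv y) := by
      intro y _
      rcases eq_or_lt_of_le (hqnn y) with h0 | hpos
      · simp [← h0]
      · rw [Real.log_mul (by norm_num) (ne_of_gt hpos)]; ring
    rw [Finset.sum_congr rfl hterm, Finset.sum_add_distrib, ← Finset.sum_mul, hsum, hlogsum]
    linarith
  have hle : ∀ y ∈ Finset.univ, qv y - 1/9 ≤ qv y * Real.log (9 * qv y) := by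
    intro y _
    rcases eq_or_lt_of_le (hqnn y) with h0 | hpos
    · rw [← h0]; norm_num
    · have hkey := aux_log_ge (t := 9 * qv y) (by positivity)
      have h1 : qv y * (1 - (9 * qv y)⁻¹) ≤ qv y * Real.log (9 * qv y) :=
        mul_le_mul_of_nonneg_left hkey (hqnn y)
      have h2 : qv y * (1 - (9 * qv y)⁻¹) = qv y - 1/9 := by
        field_simp
      linarith
  have hsumle : ∑ y, (qv y - 1/9) = 0 := by
    rw [Finset.sum_sub_distrib, hsum, Finset.sum_const, Finset.card_univ, hcard]
    norm_num
  have heq := (Finset.sum_eq_sum_iff_of_le hle).1 (by rw [hgsum, hsumle])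
  intro y
  have hy := heq y (Finset.mem_univ y)
  rcases eq_or_lt_of_le (hqnn y) with h0 | hpos
  · exfalso
    rw [← h0] at hy
    norm_num at hy
  · have h2 : qv y * (1 - (9 * qv y)⁻¹) = qv y - 1/9 := by field_simp
    have h3 : qv y * Real.log (9 * qv y) = qv y * (1 - (9 * qv y)⁻¹) := by linarith
    have h4 : Real.log (9 * qv y) = 1 - (9 * qv y)⁻¹ :=
      mul_left_cancel₀ (ne_of_gt hpos) h3
    have h5 := aux_log_eq (t := 9 * qv y) (by positivity) h4
    show qv y = 1/9
    linarith

/-- If `X = (X_1,…,X_5)` are `F_3`-valued random variables such that for every choice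
of distinct `a,b,c,d,e` covering `{1,…,5}` we have `H(X_a,X_b,X_c | X_d,X_e) = 0` and
`H(X_d,X_e) = 2` (base-3 entropies), then every outcome has probability `0` or `1/9`. -/
theorem entropic_U25_outcome_probs (μ : PMF (Fin 5 → ZMod 3))
    (h : ∀ a b c d e : Fin 5, ({a, b, c, d, e} : Finset (Fin 5)) = Finset.univ →
      shannonEntropy 3 (marg μ ({d, e} : Finset (Fin 5))) = 2 ∧
      shannonEntropy 3 (marg μ ({a, b, c, d, e} : Finset (Fin 5))) -
        shannonEntropy 3 (marg μ ({d, e} : Finset (Fin 5))) = 0) :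
    ∀ x : Fin 5 → ZMod 3, μ x = 0 ∨ μ x = 1 / 9 := by
  intro x
  obtain ⟨hpair, hdiff⟩ := h 2 3 4 0 1 (by decide)
  have hfull5 : shannonEntropy 3 (marg μ ({2,3,4,0,1} : Finset (Fin 5))) = 2 := by linarith
  -- entropy of the full distribution is 2
  have hinj : Function.Injective
      (fun (z : Fin 5 → ZMod 3) (i : {i // i ∈ ({2,3,4,0,1} : Finset (Fin 5))}) => z i.1) := by
    intro a b hab
    funext i
    have hi : i ∈ ({2,3,4,0,1} : Finset (Fin 5)) := by revert i; decide
    exact congrFun hab ⟨i, hi⟩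
  have hfull : shannonEntropy 3 μ = 2 := by
    rw [marg, shannonEntropy_map_of_injective 3 μ _ hinj] at hfull5
    exact hfull5
  -- the pair marginal is uniform
  have hcard : Fintype.card ({i // i ∈ ({0,1} : Finset (Fin 5))} → ZMod 3) = 9 := by
    simp only [Fintype.card_fun, Fintype.card_subtype, ZMod.card]
    rw [Finset.filter_mem_eq_inter, Finset.univ_inter,
      show ({0,1} : Finset (Fin 5)).card = 2 from by decide]
    norm_num
  have hq : ∀ y, ((marg μ ({0,1} : Finset (Fin 5))) y).toReal = 1/9 :=
    uniform_of_entropy_eq hcard _ hpair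
  set π : (Fin 5 → ZMod 3) → ({i // i ∈ ({0,1} : Finset (Fin 5))} → ZMod 3) :=
    fun z i => z i.1 with hπ
  -- each point mass is at most its fiber's total, i.e. 1/9
  have hple : ∀ z, (μ z).toReal ≤ 1/9 := by
    intro z
    rw [← hq (π z)]
    have hEN : μ z ≤ (marg μ ({0,1} : Finset (Fin 5))) (π z) := by
      rw [marg, PMF.map_apply]
      refine le_trans (le_of_eq ?_) (ENNReal.le_tsum z)
      exact (if_pos rfl).symm
    exact ENNReal.toReal_mono (PMF.apply_ne_top _ _) hEN
  -- pointwise entropy bound with equality overall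
  have hlogmin : Real.logb 3 ((1:ℝ)/9) = -2 := by
    have hlog3 : (0:ℝ) < Real.log 3 := Real.log_pos (by norm_num)
    rw [Real.logb, show ((1:ℝ)/9) = ((3:ℝ) ^ (2:ℕ))⁻¹ by norm_num, Real.log_inv, Real.log_pow]
    push_cast
    field_simp
  have hlepoint : ∀ z ∈ Finset.univ, 2 * (μ z).toReal ≤ -((μ z).toReal * Real.logb 3 (μ z).toReal) := by
    intro z _
    rcases eq_or_lt_of_le (ENNReal.toReal_nonneg : (0:ℝ) ≤ (μ z).toReal) with h0 | hpos
    · rw [← h0]; norm_num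
    · have hlb : Real.logb 3 ((μ z).toReal) ≤ Real.logb 3 ((1:ℝ)/9) :=
        Real.logb_le_logb_of_le (by norm_num) hpos (hple z)
      rw [hlogmin] at hlb
      nlinarith
  have hsums : ∑ z, 2 * (μ z).toReal = ∑ z, -((μ z).toReal * Real.logb 3 ((μ z).toReal)) := by
    rw [← Finset.mul_sum, pmf_toReal_sum_one μ, Finset.sum_neg_distrib]
    unfold shannonEntropy at hfull
    linarith
  have heqx := (Finset.sum_eq_sum_iff_of_le hlepoint).1 hsums x (Finset.mem_univ x)
  rcases eq_or_lt_of_le (ENNReal.toReal_nonneg : (0:ℝ) ≤ (μ x).toReal) with h0 | hpos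
  · left
    exact ((ENNReal.toReal_eq_zero_iff _).1 h0.symm).resolve_right (PMF.apply_ne_top μ x)
  · right
    have hlogb : Real.logb 3 ((μ x).toReal) = -2 := by
      have h1 : 2 * (μ x).toReal = (μ x).toReal * (-(Real.logb 3 ((μ x).toReal))) := by linarith
      have h2 : (μ x).toReal * 2 = (μ x).toReal * (-(Real.logb 3 ((μ x).toReal))) := by linarith
      have := mul_left_cancel₀ (ne_of_gt hpos) h2
      linarith
    have htr : (μ x).toReal = 1/9 := by
      have h3 : (3:ℝ) ^ Real.logb 3 ((μ x).toReal) = (μ x).toReal :=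
        Real.rpow_logb (by norm_num) (by norm_num) hpos
      rw [hlogb] at h3
      rw [← h3, show (-2:ℝ) = ((-2 : ℤ):ℝ) by norm_num, Real.rpow_intCast]
      norm_num
    exact (ENNReal.toReal_eq_toReal_iff' (PMF.apply_ne_top μ x) (by norm_num)).1
      (by rw [htr]; norm_num)
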